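/- Fix κ ≥ 0. If (A,B) ∈ M²×M² satisfies det A = 1 and ⟨B, cof A⟩ = 0, then Λ(A,B) = (4X₁(A,B) + 2X₂(A,B)² − 2X₃(A,B)²)/|A|⁴. -/
import Mathlib


open Matrix

set_option maxRecDepth 8000
set_option maxHeartbeats 1000000

noncomputable section

/-- `M²`: the space of 2×2 real matrices. -/
abbrev M2 : Type := Matrix (Fin 2) (Fin 2) ℝ

/-- Frobenius inner product `⟨A,B⟩ = tr(AᵀB)`. -/
def mip (A B : M2) : ℝ := (Aᵀ * B).trace

/-- Frobenius norm `|A| = ⟨A,A⟩^{1/2}`. -/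
def fnorm (A : M2) : ℝ := Real.sqrt (mip A A)

/-- The matrix Z = [[0,−1],[1,0]]. -/
def Zm : M2 := !![0, -1; 1, 0]

/-- The matrix K = [[1,0],[0,−1]]. -/
def Km : M2 := !![1, 0; 0, -1]

/-- The matrix M = [[0,1],[1,0]]. -/
def Mm : M2 := !![0, 1; 1, 0]

/-- Cofactor: cof [[a,b],[c,d]] = [[d,−c],[−b,a]]. -/
def cofm (A : M2) : M2 := !![A 1 1, -(A 1 0); -(A 0 1), A 0 0]

/-- Membership in SO(2,ℝ). -/
def isSO (U : M2) : Prop := U.det = 1 ∧ U⁻¹ = Uᵀ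

/-- The rotation U(θ) = cos θ·I + sin θ·Z. -/
def Um (θ : ℝ) : M2 := Real.cos θ • (1 : M2) + Real.sin θ • Zm

/-- Invariant X₁(A,B) = ½|B|² + (κ/2)|A|². -/
def X1 (κ : ℝ) (A B : M2) : ℝ := (1/2) * mip B B + (κ/2) * mip A A

/-- Invariant X₂(A,B) = ½⟨ZA − AZ, B⟩. -/
def X2 (A B : M2) : ℝ := (1/2) * mip (Zm * A - A * Zm) B

/-- Invariant X₃(A,B) = ½⟨ZA + AZ, B⟩. -/
def X3 (A B : M2) : ℝ := (1/2) * mip (Zm * A + A * Zm) B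

/-- Lagrange multiplier Λ(A,B) = 2(κ − det B)/|A|². -/
def Lam (κ : ℝ) (A B : M2) : ℝ := 2 * (κ - B.det) / (mip A A)

attribute [local instance] Matrix.normedAddCommGroup Matrix.normedSpace

/-- alternate expression for the Lagrange multiplier on D. -/
theorem lam_formula (κ : ℝ) (hκ : 0 ≤ κ) (A B : M2)
    (hdet : A.det = 1) (htan : mip B (cofm A) = 0) :
    Lam κ A B = (4 * X1 κ A B + 2 * X2 A B ^ 2 - 2 * X3 A B ^ 2) / (mip A A) ^ 2 := by
  rw [Matrix.det_fin_two A] at hdet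
  rw [Lam, X1, X2, X3, Matrix.det_fin_two B]
  have hZ00 : Zm 0 0 = 0 := rfl
  have hZ01 : Zm 0 1 = -1 := rfl
  have hZ10 : Zm 1 0 = 1 := rfl
  have hZ11 : Zm 1 1 = 0 := rfl
  have hC00 : cofm A 0 0 = A 1 1 := rfl
  have hC01 : cofm A 0 1 = -(A 1 0) := rfl
  have hC10 : cofm A 1 0 = -(A 0 1) := rfl
  have hC11 : cofm A 1 1 = A 0 0 := rfl
  simp only [mip, Matrix.trace_fin_two, Matrix.mul_apply,
    Matrix.transpose_apply, Matrix.sub_apply, Matrix.add_apply,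
    Fin.sum_univ_two, hZ00, hZ01, hZ10, hZ11, hC00, hC01, hC10, hC11] at htan ⊢
  set a := A 0 0; set b := A 0 1; set c := A 1 0; set d := A 1 1
  set p := B 0 0; set q := B 0 1; set r := B 1 0; set s := B 1 1
  have hn : a * a + c * c + (b * b + d * d) > 0 := by
    nlinarith [sq_nonneg (a+d), sq_nonneg (a-d), sq_nonneg (b+c), sq_nonneg (b-c)]
  have hne : a * a + c * c + (b * b + d * d) ≠ 0 := ne_of_gt hn
  rw [div_eq_div_iff hne (pow_ne_zero 2 hne)]
  linear_combination (2*(a*a+c*c+(b*b+d*d))*(p^2+q^2+r^2+s^2))*hdet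
    - (2*(a*a+c*c+(b*b+d*d))*(a*p+b*q+c*r+d*s))*htan
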